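/- Let V be a 4-dimensional real vector space with a nondegenerate symmetric bilinear form g, and let DR, DT : V → Sym²(V*) be linear maps with scalar traces dR(j) = tr_g(DR_j), dT(j) = tr_g(DT_j). Define H(j,k,l) = DR_j(k,l) + DR_k(l,j) + DR_l(j,k) − (1/3)[g(k,l)dR(j) + g(l,j)dR(k) + g(j,k)dR(l)] and T(j,k,l) = DT_j(k,l) + DT_k(l,j) + DT_l(j,k) − (1/6)[g(k,l)dT(j) + g(l,j)dT(k) + g(j,k)dT(l)]. Assume the contracted second Bianchi identity: for all l ∈ V, the contraction g^{jk}DR_j(k,l) of DR over its first two slots with the inverse of g equals (1/2)dR(l). If H(j,k,l) = T(j,k,l) for all j,k,l ∈ V, then the stress-energy tensor is divergence-free: g^{jk}DT_j(k,l) = 0 for all l ∈ V. -/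

import Mathlib

open LinearMap (BilinForm)

/-- The trace of a bilinear form `B` with respect to a nondegenerate bilinear form `g`. -/
noncomputable def traceG {V : Type*} [AddCommGroup V] [Module ℝ V] [FiniteDimensional ℝ V]
    (g : BilinForm ℝ V) (hg : g.Nondegenerate) (B : BilinForm ℝ V) : ℝ :=
  LinearMap.trace ℝ V (((LinearMap.BilinForm.toDual g hg).symm : Module.Dual ℝ V →ₗ[ℝ] V) ∘ₗ B)

/-- The divergence `g^{jk} D_j(k,l)`: the contraction of the trilinear form
`(j,k) ↦ D_j(k,l)` over its first two slots with the inverse of `g`. -/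
noncomputable def divG {V : Type*} [AddCommGroup V] [Module ℝ V] [FiniteDimensional ℝ V]
    (g : BilinForm ℝ V) (hg : g.Nondegenerate)
    (D : V →ₗ[ℝ] BilinForm ℝ V) (l : V) : ℝ :=
  traceG g hg ((LinearMap.lflip.toLinearMap ∘ₗ D).flip l)

section Aux

variable {V : Type*} [AddCommGroup V] [Module ℝ V] [FiniteDimensional ℝ V]

lemma trace_real_endo (f : ℝ →ₗ[ℝ] ℝ) : LinearMap.trace ℝ ℝ f = f 1 := by
  have h : f = f 1 • LinearMap.id := by
    ext x
    simp [mul_comm]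
  rw [h, map_smul, LinearMap.trace_id]
  simp

lemma trace_smulRight_dual (c : Module.Dual ℝ V) (x : V) :
    LinearMap.trace ℝ V (c.smulRight x) = c x := by
  have h : c.smulRight x = (LinearMap.toSpanSingleton ℝ V x) ∘ₗ c := by
    ext v; simp
  rw [h, ← LinearMap.trace_comp_comm', trace_real_endo]
  simp

variable (g : BilinForm ℝ V) (hg : g.Nondegenerate)

lemma traceG_add (B C : BilinForm ℝ V) :
    traceG g hg (B + C) = traceG g hg B + traceG g hg C := by
  unfold traceG
  rw [← map_add]
  congr 1
  ext v
  simp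

lemma traceG_smul (c : ℝ) (B : BilinForm ℝ V) :
    traceG g hg (c • B) = c * traceG g hg B := by
  unfold traceG
  rw [← smul_eq_mul, ← map_smul]
  congr 1
  ext v
  simp

lemma traceG_sub (B C : BilinForm ℝ V) :
    traceG g hg (B - C) = traceG g hg B - traceG g hg C := by
  unfold traceG
  rw [← map_sub]
  congr 1
  ext v
  simp

lemma traceG_self : traceG g hg g = (Module.finrank ℝ V : ℝ) := by
  unfold traceG
  have h : ((LinearMap.BilinForm.toDual g hg).symm : Module.Dual ℝ V →ₗ[ℝ] V) ∘ₗ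
      (g : V →ₗ[ℝ] Module.Dual ℝ V) = LinearMap.id := by
    ext x
    exact (LinearMap.BilinForm.toDual g hg).symm_apply_apply x
  rw [h, LinearMap.trace_id]

lemma traceG_smulRight (c : V →ₗ[ℝ] ℝ) (d : Module.Dual ℝ V) :
    traceG g hg (c.smulRight d) =
      c ((LinearMap.BilinForm.toDual g hg).symm d) := by
  unfold traceG
  have h : ((LinearMap.BilinForm.toDual g hg).symm : Module.Dual ℝ V →ₗ[ℝ] V) ∘ₗ
      (c.smulRight d) = c.smulRight ((LinearMap.BilinForm.toDual g hg).symm d) := by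
    ext v; simp
  rw [h, trace_smulRight_dual]

lemma traceG_lflip (hgsymm : g.IsSymm) (B : BilinForm ℝ V) :
    traceG g hg (LinearMap.lflip (R₀ := ℝ) B) = traceG g hg B := by
  set φ : Module.Dual ℝ V →ₗ[ℝ] V :=
    ((LinearMap.BilinForm.toDual g hg).symm : Module.Dual ℝ V →ₗ[ℝ] V) with hφ
  set f : V →ₗ[ℝ] V := φ ∘ₗ B with hf
  have key : (LinearMap.lflip (R₀ := ℝ) B : BilinForm ℝ V) =
      f.dualMap ∘ₗ (g : V →ₗ[ℝ] Module.Dual ℝ V) := by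
    ext x y
    have h1 : B y = (LinearMap.BilinForm.toDual g hg) (f y) :=
      ((LinearMap.BilinForm.toDual g hg).apply_symm_apply (B y)).symm
    have h2 : B y x = g (f y) x := by rw [h1]; rfl
    have h3 : g x (f y) = g (f y) x := hgsymm.eq x (f y)
    simp only [LinearMap.lflip_apply, LinearMap.coe_comp, Function.comp_apply,
      LinearMap.dualMap_apply, LinearMap.flip_apply]
    rw [h2, ← h3]
  have hgφ : (g : V →ₗ[ℝ] Module.Dual ℝ V) ∘ₗ φ = LinearMap.id := by
    refine LinearMap.ext fun c => LinearMap.ext fun y => ?_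
    exact LinearMap.BilinForm.apply_toDual_symm_apply (hB := hg) c y
  calc LinearMap.trace ℝ V (φ ∘ₗ LinearMap.lflip (R₀ := ℝ) B)
      = LinearMap.trace ℝ V (φ ∘ₗ (f.dualMap ∘ₗ (g : V →ₗ[ℝ] Module.Dual ℝ V))) := by rw [key]
    _ = LinearMap.trace ℝ (Module.Dual ℝ V)
          ((f.dualMap ∘ₗ (g : V →ₗ[ℝ] Module.Dual ℝ V)) ∘ₗ φ) :=
        (LinearMap.trace_comp_comm' _ _).symm
    _ = LinearMap.trace ℝ (Module.Dual ℝ V) f.dualMap := by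
        rw [LinearMap.comp_assoc, hgφ, LinearMap.comp_id]
    _ = LinearMap.trace ℝ V f := by
        rw [LinearMap.dualMap_def, LinearMap.trace_transpose']
    _ = traceG g hg B := rfl

end Aux

/-- Given the contracted second Bianchi identity `g^{jk} ∇_j R_{kl} = (1/2) ∇_l R`,
Harada's field equation `H_{jkl} = T_{jkl}` implies the conservation law
`g^{jk} ∇_j T_{kl} = 0`. -/
theorem harada_implies_conservation
    {V : Type*} [AddCommGroup V] [Module ℝ V] [FiniteDimensional ℝ V]
    (hdim : Module.finrank ℝ V = 4)
    (g : BilinForm ℝ V) (hgsymm : g.IsSymm) (hg : g.Nondegenerate)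
    (DR DT : V →ₗ[ℝ] BilinForm ℝ V)
    (hDRsymm : ∀ j, (DR j).IsSymm) (hDTsymm : ∀ j, (DT j).IsSymm)
    (dR : V → ℝ) (hdR : ∀ j, dR j = traceG g hg (DR j))
    (dT : V → ℝ) (hdT : ∀ j, dT j = traceG g hg (DT j))
    (H T : V → V → V → ℝ)
    (hH : ∀ j k l, H j k l = DR j k l + DR k l j + DR l j k
      - (1/3) * (g k l * dR j + g l j * dR k + g j k * dR l))
    (hT : ∀ j k l, T j k l = DT j k l + DT k l j + DT l j k
      - (1/6) * (g k l * dT j + g l j * dT k + g j k * dT l))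
    (hBianchi : ∀ l, divG g hg DR l = (1/2) * dR l)
    (hfield : ∀ j k l, H j k l = T j k l) :
    ∀ l, divG g hg DT l = 0 := by
  intro l
  set φ : Module.Dual ℝ V →ₗ[ℝ] V :=
    ((LinearMap.BilinForm.toDual g hg).symm : Module.Dual ℝ V →ₗ[ℝ] V) with hφ
  -- scalar traces as linear maps
  set trL : (V →ₗ[ℝ] Module.Dual ℝ V) →ₗ[ℝ] V →ₗ[ℝ] V :=
    LinearMap.llcomp ℝ V (Module.Dual ℝ V) V φ with htrL
  set δR : V →ₗ[ℝ] ℝ := (LinearMap.trace ℝ V) ∘ₗ trL ∘ₗ DR with hδRdef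
  set δT : V →ₗ[ℝ] ℝ := (LinearMap.trace ℝ V) ∘ₗ trL ∘ₗ DT with hδTdef
  have hδR : ∀ j, δR j = dR j := fun j => (hdR j).symm
  have hδT : ∀ j, δT j = dT j := fun j => (hdT j).symm
  -- the bilinear forms obtained from H and T by fixing the last slot
  set BH : BilinForm ℝ V :=
    (LinearMap.lflip.toLinearMap ∘ₗ DR).flip l + LinearMap.lflip (R₀ := ℝ) (DR.flip l) + DR l
      - (3⁻¹ : ℝ) • (δR.smulRight (g l) + (g l).smulRight δR + δR l • g) with hBH
  set BT : BilinForm ℝ V :=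
    (LinearMap.lflip.toLinearMap ∘ₗ DT).flip l + LinearMap.lflip (R₀ := ℝ) (DT.flip l) + DT l
      - (6⁻¹ : ℝ) • (δT.smulRight (g l) + (g l).smulRight δT + δT l • g) with hBT
  have hform : BH = BT := by
    ext j k
    have h0 := hfield j k l
    rw [hH, hT] at h0
    have hs : g l k = g k l := hgsymm.eq l k
    simp only [hBH, hBT, LinearMap.add_apply, LinearMap.sub_apply, LinearMap.smul_apply,
      LinearMap.flip_apply, LinearMap.coe_comp, Function.comp_apply, LinearMap.lflip_apply,
      LinearMap.smulRight_apply, smul_eq_mul, hδR, hδT, LinearEquiv.coe_coe]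
    linear_combination h0 + (6⁻¹ * dT j - 3⁻¹ * dR j) * hs
  have htr := congrArg (traceG g hg) hform
  -- trace computations
  have hφgl : (LinearMap.BilinForm.toDual g hg).symm (g l) = l :=
    (LinearMap.BilinForm.toDual g hg).symm_apply_apply l
  have eRflip : DR.flip l = (LinearMap.lflip.toLinearMap ∘ₗ DR).flip l := by
    ext j k
    simpa using (hDRsymm j).eq l k
  have eTflip : DT.flip l = (LinearMap.lflip.toLinearMap ∘ₗ DT).flip l := by
    ext j k
    simpa using (hDTsymm j).eq l k
  have e2R : traceG g hg (LinearMap.lflip (R₀ := ℝ) (DR.flip l)) = divG g hg DR l := by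
    rw [traceG_lflip g hg hgsymm, eRflip]; rfl
  have e2T : traceG g hg (LinearMap.lflip (R₀ := ℝ) (DT.flip l)) = divG g hg DT l := by
    rw [traceG_lflip g hg hgsymm, eTflip]; rfl
  have e4R : traceG g hg (δR.smulRight (g l)) = dR l := by
    rw [traceG_smulRight, hφgl, hδR]
  have e4T : traceG g hg (δT.smulRight (g l)) = dT l := by
    rw [traceG_smulRight, hφgl, hδT]
  have e5R : traceG g hg ((g l).smulRight δR) = dR l := by
    rw [traceG_smulRight]
    have h1 : g l ((LinearMap.BilinForm.toDual g hg).symm δR)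
        = g ((LinearMap.BilinForm.toDual g hg).symm δR) l := hgsymm.eq l _
    have h2 : g ((LinearMap.BilinForm.toDual g hg).symm δR) l = δR l :=
      LinearMap.BilinForm.apply_toDual_symm_apply (hB := hg) δR l
    rw [h1, h2, hδR]
  have e5T : traceG g hg ((g l).smulRight δT) = dT l := by
    rw [traceG_smulRight]
    have h1 : g l ((LinearMap.BilinForm.toDual g hg).symm δT)
        = g ((LinearMap.BilinForm.toDual g hg).symm δT) l := hgsymm.eq l _
    have h2 : g ((LinearMap.BilinForm.toDual g hg).symm δT) l = δT l :=
      LinearMap.BilinForm.apply_toDual_symm_apply (hB := hg) δT l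
    rw [h1, h2, hδT]
  have e6R : traceG g hg (δR l • g) = dR l * 4 := by
    rw [traceG_smul, traceG_self, hdim, hδR]; norm_num
  have e6T : traceG g hg (δT l • g) = dT l * 4 := by
    rw [traceG_smul, traceG_self, hdim, hδT]; norm_num
  rw [hBH, hBT, traceG_sub, traceG_sub, traceG_add, traceG_add, traceG_add, traceG_add,
    traceG_smul, traceG_smul, traceG_add, traceG_add, traceG_add, traceG_add,
    e2R, e2T, e4R, e4T, e5R, e5T, e6R, e6T] at htr
  have hdiv : traceG g hg ((LinearMap.lflip.toLinearMap ∘ₗ DR).flip l) = divG g hg DR l := rfl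
  have hdiv' : traceG g hg ((LinearMap.lflip.toLinearMap ∘ₗ DT).flip l) = divG g hg DT l := rfl
  rw [hdiv, hdiv', hBianchi l, ← hdR l, ← hdT l, hdR l, hdT l] at htr
  have hRl := hdR l
  have hTl := hdT l
  linarith [htr]
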